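/- Fix an even k = 2s, α = 2π/k, and directions u_j = (cos(2πj/k), −sin(2πj/k)). Let C_i be the cone at the origin bounded by u_i and u_{i+1}. Let p, q be distinct points with q ∈ C_i[p] (the translate of C_i with apex p). Suppose the ray u_ℓ[p] and the ray v[q] (for a unit vector v) intersect the perpendicular bisector b_pq at the same point. Then v lies in C_{2i+s−ℓ} ∪ C_{2i+s−ℓ+1}, where cone indices are taken mod k. -/

import Mathlib

open Real

abbrev E2 := EuclideanSpace ℝ (Fin 2)

/-- The `j`-th of the `k` equally spaced unit directions. -/
noncomputable def dir (k : ℕ) (j : ℤ) : E2 :=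
  (WithLp.equiv 2 (Fin 2 → ℝ)).symm ![Real.cos (2 * π * j / k), -Real.sin (2 * π * j / k)]

/-- `exp (x * I)` as an auxiliary complex exponential. -/
noncomputable def el (x : ℝ) : ℂ := Complex.exp (x * Complex.I)

lemma el_eq (x : ℝ) : el x = (Real.cos x : ℂ) + (Real.sin x : ℂ) * Complex.I := by
  rw [el, Complex.exp_mul_I, Complex.ofReal_cos, Complex.ofReal_sin]

lemma el_re (x : ℝ) : (el x).re = Real.cos x := by rw [el_eq]; simp [Complex.cos_ofReal_re, Complex.sin_ofReal_re]

lemma el_im (x : ℝ) : (el x).im = Real.sin x := by rw [el_eq]; simp [Complex.cos_ofReal_re, Complex.sin_ofReal_re]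

lemma el_ne (x : ℝ) : el x ≠ 0 := Complex.exp_ne_zero _

lemma el_mul (x y : ℝ) : el x * el y = el (x + y) := by
  rw [el, el, el, ← Complex.exp_add, Complex.ofReal_add]; ring_nf

lemma el_add_el_neg (x : ℝ) : el x + el (-x) = 2 * (Real.cos x : ℂ) := by
  rw [el_eq, el_eq, Real.cos_neg, Real.sin_neg]; push_cast; ring

/-- The complex version of `dir`. -/
noncomputable def eldir (s : ℕ) (j : ℤ) : ℂ := el (-(2 * π * j / (2 * s : ℕ)))

lemma eldir_mul (s : ℕ) (j₁ j₂ : ℤ) :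
    eldir s j₁ * eldir s j₂ = eldir s (j₁ + j₂) := by
  rw [eldir, eldir, eldir, el_mul]; congr 1; push_cast; ring

lemma eldir_re (s : ℕ) (j : ℤ) :
    (eldir s j).re = Real.cos (2 * π * j / (2 * s : ℕ)) := by
  rw [eldir, el_re, Real.cos_neg]

lemma eldir_im (s : ℕ) (j : ℤ) :
    (eldir s j).im = -Real.sin (2 * π * j / (2 * s : ℕ)) := by
  rw [eldir, el_im, Real.sin_neg]

lemma eldir_ne (s : ℕ) (j : ℤ) : eldir s j ≠ 0 := el_ne _

lemma eldir_zero (s : ℕ) : eldir s 0 = 1 := by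
  simp [eldir, el]

lemma eldir_s (s : ℕ) (hs : s ≠ 0) : eldir s (s : ℤ) = -1 := by
  have hs' : (s : ℝ) ≠ 0 := Nat.cast_ne_zero.mpr hs
  have harg : (2 * π * ((s : ℤ) : ℝ) / ((2 * s : ℕ) : ℝ)) = π := by
    push_cast; field_simp
  rw [eldir, harg, el_eq]
  simp [Real.cos_pi, Real.sin_pi]

set_option maxHeartbeats 2000000 in
theorem compatible_direction_cone (s : ℕ) (hs : 4 ≤ s) (i ℓ : ℤ)
    (p q w : E2) (hpq : p ≠ q) (v : E2) (hv : ‖v‖ = 1)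
    (hqC : ∃ a b : ℝ, 0 ≤ a ∧ 0 ≤ b ∧
      q = p + a • dir (2 * s) i + b • dir (2 * s) (i + 1))
    (t₁ t₂ : ℝ) (ht₁ : 0 ≤ t₁) (ht₂ : 0 ≤ t₂)
    (hw₁ : w = p + t₁ • dir (2 * s) ℓ) (hw₂ : w = q + t₂ • v)
    (hbis : dist w p = dist w q) :
    (∃ a b : ℝ, 0 ≤ a ∧ 0 ≤ b ∧
      v = a • dir (2 * s) (2 * i + (s : ℤ) - ℓ) + b • dir (2 * s) (2 * i + (s : ℤ) - ℓ + 1)) ∨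
    (∃ a b : ℝ, 0 ≤ a ∧ 0 ≤ b ∧
      v = a • dir (2 * s) (2 * i + (s : ℤ) - ℓ + 1) + b • dir (2 * s) (2 * i + (s : ℤ) - ℓ + 2)) := by
  obtain ⟨a, b, ha, hb, hq⟩ := hqC
  have hsne : s ≠ 0 := by omega
  have hsR : (s : ℝ) ≠ 0 := Nat.cast_ne_zero.mpr hsne
  -- directions are unit vectors
  have hdn : ∀ j : ℤ, ‖dir (2 * s) j‖ = 1 := by
    intro j
    rw [EuclideanSpace.norm_eq, Fin.sum_univ_two]
    simp only [dir, WithLp.equiv_symm_apply, PiLp.toLp_apply, Matrix.cons_val_zero, Matrix.cons_val_one,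
      Matrix.head_cons, Real.norm_eq_abs, sq_abs, neg_sq]
    rw [Real.cos_sq_add_sin_sq, Real.sqrt_one]
  -- t₁ = t₂ > 0
  have hd1 : dist w p = t₁ := by
    rw [dist_eq_norm, hw₁, add_sub_cancel_left, norm_smul, hdn, Real.norm_eq_abs,
      abs_of_nonneg ht₁, mul_one]
  have hd2 : dist w q = t₂ := by
    rw [dist_eq_norm, hw₂, add_sub_cancel_left, norm_smul, hv, Real.norm_eq_abs,
      abs_of_nonneg ht₂, mul_one]
  have htt : t₁ = t₂ := by rw [← hd1, ← hd2, hbis]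
  have htpos : 0 < t₁ := by
    rcases eq_or_lt_of_le ht₁ with h0 | h; swap
    · exact h
    exfalso
    apply hpq
    have hwp : w = p := by rw [hw₁, ← h0, zero_smul, add_zero]
    have hwq : w = q := by rw [hw₂, ← htt, ← h0, zero_smul, add_zero]
    rw [← hwp, hwq]
  -- main vector equation
  have hvec : p + t₁ • dir (2 * s) ℓ
      = p + a • dir (2 * s) i + b • dir (2 * s) (i + 1) + t₂ • v := by
    rw [← hw₁, hw₂, hq]
  have h0 := congrArg (fun z : E2 => z 0) hvec
  have h1 := congrArg (fun z : E2 => z 1) hvec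
  simp only [dir, PiLp.add_apply, PiLp.smul_apply, smul_eq_mul,
    WithLp.equiv_symm_apply, PiLp.toLp_apply, Matrix.cons_val_zero, Matrix.cons_val_one,
    Matrix.head_cons] at h0 h1
  -- |v| = 1 componentwise
  have hv2 : v 0 ^ 2 + v 1 ^ 2 = 1 := by
    rw [EuclideanSpace.norm_eq, Fin.sum_univ_two] at hv
    simp only [Real.norm_eq_abs, sq_abs] at hv
    exact Real.sqrt_eq_one.mp hv

  -- complex setup
  set m : ℤ := 2 * i + (s : ℤ) - ℓ with hm
  set gi := eldir s i with hgi
  set gic := eldir s (-i) with hgic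
  set gl := eldir s ℓ with hgl
  set glc := eldir s (-ℓ) with hglc
  set hh := eldir s 1 with hhh
  set hhc := eldir s (-1) with hhhc
  set ca := Real.cos (2 * π / ((2 * s : ℕ) : ℝ)) with hca
  set V : ℂ := (v 0 : ℂ) + (v 1 : ℂ) * Complex.I with hV
  set Vc : ℂ := (v 0 : ℂ) - (v 1 : ℂ) * Complex.I with hVc
  have p3 : V * Vc = 1 := by
    have e1 : V * Vc = ((v 0 ^ 2 + v 1 ^ 2 : ℝ) : ℂ) := by
      rw [hV, hVc]; push_cast
      linear_combination (-((v 1 : ℂ) ^ 2)) * Complex.I_sq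
    rw [e1, hv2, Complex.ofReal_one]
  have p4 : gi * gic = 1 := by rw [hgi, hgic, eldir_mul, add_neg_cancel, eldir_zero]
  have p5 : gl * glc = 1 := by rw [hgl, hglc, eldir_mul, add_neg_cancel, eldir_zero]
  have p6 : hh * hhc = 1 := by rw [hhh, hhhc, eldir_mul, add_neg_cancel, eldir_zero]
  have p7 : hh + hhc = 2 * (ca : ℂ) := by
    have e1 : hhc = el (2 * π * ((1 : ℤ) : ℝ) / ((2 * s : ℕ) : ℝ)) := by
      rw [hhhc, eldir]; congr 1; push_cast; ring
    have e2 : hh = el (-(2 * π * ((1 : ℤ) : ℝ) / ((2 * s : ℕ) : ℝ))) := by rw [hhh, eldir]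
    rw [e1, e2, add_comm, el_add_el_neg]
    congr 2
    rw [hca]; push_cast; ring
  rw [← htt] at h0 h1
  have p1 : (t₁ : ℂ) * gl = (a : ℂ) * gi + (b : ℂ) * (gi * hh) + (t₁ : ℂ) * V := by
    have hgih : gi * hh = eldir s (i + 1) := by rw [hgi, hhh, eldir_mul]
    rw [hgih, hV, hgl, hgi]
    apply Complex.ext
    · simp only [Complex.add_re, Complex.add_im, Complex.mul_re, Complex.mul_im,
        Complex.ofReal_re, Complex.ofReal_im, Complex.I_re, Complex.I_im, eldir_re, eldir_im,
        zero_mul, mul_zero, sub_zero, zero_add, add_zero, mul_one, zero_sub]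
      linarith [h0]
    · simp only [Complex.add_re, Complex.add_im, Complex.mul_re, Complex.mul_im,
        Complex.ofReal_re, Complex.ofReal_im, Complex.I_re, Complex.I_im, eldir_re, eldir_im,
        zero_mul, mul_zero, sub_zero, zero_add, add_zero, mul_one, zero_sub]
      linarith [h1]
  have p2 : (t₁ : ℂ) * glc = (a : ℂ) * gic + (b : ℂ) * (gic * hhc) + (t₁ : ℂ) * Vc := by
    have hgih : gic * hhc = eldir s (-(i + 1)) := by
      rw [hgic, hhhc, eldir_mul]; congr 1; ring
    have hnre : ∀ j : ℤ, (eldir s (-j)).re = Real.cos (2 * π * j / (2 * s : ℕ)) := by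
      intro j
      rw [eldir_re]
      rw [show (2 * π * ((-j : ℤ) : ℝ) / ((2 * s : ℕ) : ℝ)) = -(2 * π * (j : ℝ) / ((2 * s : ℕ) : ℝ)) by push_cast; ring, Real.cos_neg]
    have hnim : ∀ j : ℤ, (eldir s (-j)).im = Real.sin (2 * π * j / (2 * s : ℕ)) := by
      intro j
      rw [eldir_im]
      rw [show (2 * π * ((-j : ℤ) : ℝ) / ((2 * s : ℕ) : ℝ)) = -(2 * π * (j : ℝ) / ((2 * s : ℕ) : ℝ)) by push_cast; ring, Real.sin_neg, neg_neg]
    rw [hgih, hVc, hglc, hgic]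
    apply Complex.ext
    · simp only [Complex.add_re, Complex.add_im, Complex.sub_re, Complex.sub_im,
        Complex.mul_re, Complex.mul_im, Complex.ofReal_re, Complex.ofReal_im,
        Complex.I_re, Complex.I_im, hnre, hnim,
        zero_mul, mul_zero, sub_zero, zero_add, add_zero, mul_one, zero_sub]
      linarith [h0]
    · simp only [Complex.add_re, Complex.add_im, Complex.sub_re, Complex.sub_im,
        Complex.mul_re, Complex.mul_im, Complex.ofReal_re, Complex.ofReal_im,
        Complex.I_re, Complex.I_im, hnre, hnim,
        zero_mul, mul_zero, sub_zero, zero_add, add_zero, mul_one, zero_sub]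
      linarith [h1]
  -- derived equations
  have p2' : (t₁ : ℂ) * (gi * hh) = (a : ℂ) * (gl * hh) + (b : ℂ) * gl
      + (t₁ : ℂ) * (gi * (gl * hh)) * Vc := by
    linear_combination (gi * gl * hh) * p2 - ((t₁ : ℂ) * gi * hh) * p5
      + ((a : ℂ) * gl * hh) * p4 + ((b : ℂ) * gl * hh * hhc) * p4 + ((b : ℂ) * gl) * p6
  have C : ((t₁ : ℂ) * gl - (a : ℂ) * gi - (b : ℂ) * (gi * hh))
      * ((t₁ : ℂ) * (gi * hh) - (a : ℂ) * (gl * hh) - (b : ℂ) * gl)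
      = (t₁ : ℂ) ^ 2 * (gi * (gl * hh)) := by
    linear_combination ((t₁ : ℂ) * gl - (a : ℂ) * gi - (b : ℂ) * (gi * hh)) * p2'
      + ((t₁ : ℂ) * (gi * (gl * hh)) * Vc) * p1 + ((t₁ : ℂ) ^ 2 * gi * gl * hh) * p3
  -- nonvanishing facts
  have habne : ¬ (a = 0 ∧ b = 0) := by
    rintro ⟨rfl, rfl⟩
    apply hpq
    rw [hq, zero_smul, zero_smul, add_zero, add_zero]
  have hca0 : 0 ≤ ca := by
    rw [hca]
    apply Real.cos_nonneg_of_mem_Icc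
    constructor
    · have : (0:ℝ) ≤ 2 * π / ((2 * s : ℕ) : ℝ) := by positivity
      linarith [pi_pos]
    · rw [div_le_iff₀ (by positivity : (0:ℝ) < ((2 * s : ℕ) : ℝ))]
      have h4 : (4:ℝ) ≤ ((2 * s : ℕ) : ℝ) := by
        push_cast
        have : (4:ℕ) ≤ 2 * s := by omega
        exact_mod_cast Nat.cast_le.mpr this
      nlinarith [pi_pos]
  have hR : 0 < a ^ 2 + b ^ 2 + 2 * a * b * ca := by
    rcases eq_or_lt_of_le ha with h0 | h0
    · rcases eq_or_lt_of_le hb with h0' | h0'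
      · exact absurd ⟨h0.symm, h0'.symm⟩ habne
      · rw [← h0]; ring_nf; nlinarith
    · nlinarith [mul_nonneg (mul_nonneg (mul_nonneg (by norm_num : (0:ℝ) ≤ 2) ha) hb) hca0]
  have hfac : ((t₁ : ℂ) * (gl * hh)) ≠ 0 := by
    apply mul_ne_zero
    · exact_mod_cast htpos.ne'
    · rw [hgl, hhh]; exact mul_ne_zero (eldir_ne s ℓ) (eldir_ne s 1)
  have hRC : ((a ^ 2 + b ^ 2 + 2 * a * b * ca : ℝ) : ℂ) ≠ 0 := by
    exact_mod_cast hR.ne'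
  -- index exponent identities
  have hXgl : eldir s m * gl = -(gi * gi) := by
    rw [hgl, eldir_mul, show m + ℓ = (i + i) + (s : ℤ) from by rw [hm]; ring,
      ← eldir_mul, ← eldir_mul, eldir_s s hsne, hgi]
    ring
  have hYgl : eldir s (m + 1) * gl = -(gi * gi * hh) := by
    rw [hgl, eldir_mul, show m + 1 + ℓ = ((i + i) + (s : ℤ)) + 1 from by rw [hm]; ring,
      ← eldir_mul, ← eldir_mul, ← eldir_mul, eldir_s s hsne, hgi, hhh]
    ring
  have hZgl : eldir s (m + 2) * gl = -(gi * gi * (hh * hh)) := by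
    rw [hgl, eldir_mul, show m + 2 + ℓ = (((i + i) + (s : ℤ)) + 1) + 1 from by rw [hm]; ring,
      ← eldir_mul, ← eldir_mul, ← eldir_mul, ← eldir_mul, eldir_s s hsne, hgi, hhh]
    ring
  -- final case split
  have hre_im : ∀ (c1 c2 : ℝ) (j1 j2 : ℤ),
      ((a ^ 2 + b ^ 2 + 2 * a * b * ca : ℝ) : ℂ) * V
        = ((c1 : ℝ) : ℂ) * eldir s j1 + ((c2 : ℝ) : ℂ) * eldir s j2 →
      (a ^ 2 + b ^ 2 + 2 * a * b * ca) * v 0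
          = c1 * Real.cos (2 * π * j1 / (2 * s : ℕ)) + c2 * Real.cos (2 * π * j2 / (2 * s : ℕ))
        ∧ (a ^ 2 + b ^ 2 + 2 * a * b * ca) * v 1
          = c1 * -Real.sin (2 * π * j1 / (2 * s : ℕ)) + c2 * -Real.sin (2 * π * j2 / (2 * s : ℕ)) := by
    intro c1 c2 j1 j2 hkey
    rw [hV] at hkey
    constructor
    · have := congrArg Complex.re hkey
      simpa only [Complex.add_re, Complex.add_im, Complex.mul_re, Complex.mul_im,
        Complex.ofReal_re, Complex.ofReal_im, Complex.I_re, Complex.I_im, eldir_re, eldir_im,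
        zero_mul, mul_zero, sub_zero, zero_add, add_zero, mul_one, zero_sub] using this
    · have := congrArg Complex.im hkey
      simpa only [Complex.add_re, Complex.add_im, Complex.mul_re, Complex.mul_im,
        Complex.ofReal_re, Complex.ofReal_im, Complex.I_re, Complex.I_im, eldir_re, eldir_im,
        zero_mul, mul_zero, sub_zero, zero_add, add_zero, mul_one, zero_sub] using this
  have hfin : ∀ (c1 c2 : ℝ) (j1 j2 : ℤ),
      ((a ^ 2 + b ^ 2 + 2 * a * b * ca : ℝ) : ℂ) * V
        = ((c1 : ℝ) : ℂ) * eldir s j1 + ((c2 : ℝ) : ℂ) * eldir s j2 →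
      v = (c1 / (a ^ 2 + b ^ 2 + 2 * a * b * ca)) • dir (2 * s) j1
        + (c2 / (a ^ 2 + b ^ 2 + 2 * a * b * ca)) • dir (2 * s) j2 := by
    intro c1 c2 j1 j2 hkey
    obtain ⟨hre, him⟩ := hre_im c1 c2 j1 j2 hkey
    apply (WithLp.equiv 2 (Fin 2 → ℝ)).injective
    funext x
    fin_cases x
    · simp only [WithLp.equiv_apply, PiLp.add_apply, PiLp.smul_apply, smul_eq_mul, dir,
        WithLp.equiv_symm_apply, PiLp.toLp_apply, Matrix.cons_val_zero, Fin.mk_zero, Fin.mk_one]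
      rw [div_mul_eq_mul_div, div_mul_eq_mul_div, ← add_div, eq_div_iff hR.ne']
      linear_combination hre
    · simp only [WithLp.equiv_apply, PiLp.add_apply, PiLp.smul_apply, smul_eq_mul, dir,
        WithLp.equiv_symm_apply, PiLp.toLp_apply, Matrix.cons_val_one, Matrix.head_cons, Matrix.cons_val_zero, Fin.mk_zero, Fin.mk_one]
      rw [div_mul_eq_mul_div, div_mul_eq_mul_div, ← add_div, eq_div_iff hR.ne']
      linear_combination him
  rcases le_total b a with hba | hab
  · -- left cone
    left
    have keyL : ((t₁ : ℂ) * (gl * hh)) * (((a ^ 2 + b ^ 2 + 2 * a * b * ca : ℝ) : ℂ) * V)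
        = ((t₁ : ℂ) * (gl * hh)) * (((a ^ 2 - b ^ 2 : ℝ) : ℂ) * eldir s m
          + ((2 * a * b + 2 * b ^ 2 * ca : ℝ) : ℂ) * eldir s (m + 1)) := by
      push_cast
      linear_combination
        (-(((a:ℂ) ^ 2 + (b:ℂ) ^ 2 + 2 * (a:ℂ) * (b:ℂ) * (ca:ℂ)) * gl * hh)) * p1
        + (-((a:ℂ) + (b:ℂ) * hh)) * C
        + (-(gl ^ 2 * hh * (a:ℂ) * (b:ℂ) * (t₁:ℂ)) + gi * gl * hh * (a:ℂ) ^ 2 * (b:ℂ)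
            + gi * gl * hh ^ 2 * (a:ℂ) * (b:ℂ) ^ 2 - gi ^ 2 * hh ^ 2 * (b:ℂ) ^ 2 * (t₁:ℂ)) * p7
        + (gl ^ 2 * (a:ℂ) * (b:ℂ) * (t₁:ℂ) - gi * gl * (a:ℂ) ^ 2 * (b:ℂ)
            - gi * gl * hh * (a:ℂ) * (b:ℂ) ^ 2 + gi ^ 2 * hh * (b:ℂ) ^ 2 * (t₁:ℂ)) * p6
        + (-((t₁:ℂ) * ((a:ℂ) ^ 2 - (b:ℂ) ^ 2) * hh)) * hXgl
        + (-((t₁:ℂ) * (2 * (a:ℂ) * (b:ℂ) + 2 * (b:ℂ) ^ 2 * (ca:ℂ)) * hh)) * hYgl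
    have keyL2 := mul_left_cancel₀ hfac keyL
    refine ⟨(a ^ 2 - b ^ 2) / (a ^ 2 + b ^ 2 + 2 * a * b * ca),
      (2 * a * b + 2 * b ^ 2 * ca) / (a ^ 2 + b ^ 2 + 2 * a * b * ca),
      div_nonneg (by nlinarith) hR.le,
      div_nonneg (by nlinarith [mul_nonneg (mul_nonneg hb hb) hca0, mul_nonneg ha hb]) hR.le,
      hfin _ _ m (m + 1) keyL2⟩
  · -- right cone
    right
    have keyR : ((t₁ : ℂ) * (gl * hh)) * (((a ^ 2 + b ^ 2 + 2 * a * b * ca : ℝ) : ℂ) * V)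
        = ((t₁ : ℂ) * (gl * hh)) * (((2 * a ^ 2 * ca + 2 * a * b : ℝ) : ℂ) * eldir s (m + 1)
          + ((b ^ 2 - a ^ 2 : ℝ) : ℂ) * eldir s (m + 2)) := by
      push_cast
      linear_combination
        (-(((a:ℂ) ^ 2 + (b:ℂ) ^ 2 + 2 * (a:ℂ) * (b:ℂ) * (ca:ℂ)) * gl * hh)) * p1
        + (-((a:ℂ) + (b:ℂ) * hh)) * C
        + (-(gl ^ 2 * hh * (a:ℂ) * (b:ℂ) * (t₁:ℂ)) + gi * gl * hh * (a:ℂ) ^ 2 * (b:ℂ)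
            + gi * gl * hh ^ 2 * (a:ℂ) * (b:ℂ) ^ 2 - gi ^ 2 * hh ^ 2 * (a:ℂ) ^ 2 * (t₁:ℂ)) * p7
        + (gl ^ 2 * (a:ℂ) * (b:ℂ) * (t₁:ℂ) - gi * gl * (a:ℂ) ^ 2 * (b:ℂ)
            - gi * gl * hh * (a:ℂ) * (b:ℂ) ^ 2 + gi ^ 2 * hh * (a:ℂ) ^ 2 * (t₁:ℂ)) * p6
        + (-((t₁:ℂ) * (2 * (a:ℂ) ^ 2 * (ca:ℂ) + 2 * (a:ℂ) * (b:ℂ)) * hh)) * hYgl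
        + (-((t₁:ℂ) * ((b:ℂ) ^ 2 - (a:ℂ) ^ 2) * hh)) * hZgl
    have keyR2 := mul_left_cancel₀ hfac keyR
    refine ⟨(2 * a ^ 2 * ca + 2 * a * b) / (a ^ 2 + b ^ 2 + 2 * a * b * ca),
      (b ^ 2 - a ^ 2) / (a ^ 2 + b ^ 2 + 2 * a * b * ca),
      div_nonneg (by nlinarith [mul_nonneg (mul_nonneg ha ha) hca0, mul_nonneg ha hb]) hR.le,
      div_nonneg (by nlinarith) hR.le,
      hfin _ _ (m + 1) (m + 2) keyR2⟩
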